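/- Let p, p' ∈ ℝⁿ with ‖p - p'‖₁ ≤ σ, ε > 0, γ ∈ ℝ. Define the randomized mechanism S(p) that independently includes each index i in the output set with probability F((p_i - γ)·ε/σ), where F is the CDF of the standard Laplace distribution (F(x) = (1/2)e^x for x < 0, F(x) = 1 - (1/2)e^{-x} for x ≥ 0). Then for every subset X ⊆ [n], Pr[S(p) = X] ≤ e^ε · Pr[S(p') = X]. -/

import Mathlib

open Finset

/-- The CDF of the standard Laplace distribution. -/
noncomputable def laplaceCDF (x : ℝ) : ℝ :=
  if x < 0 then (1 / 2) * Real.exp x else 1 - (1 / 2) * Real.exp (-x)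

/-- Probability that the sparsification mechanism run on `p` outputs exactly the set `X`:
each index `i` is independently included with probability `F((p i - γ)·ε/σ)`. -/
noncomputable def sparsificationProb {n : ℕ} (p : Fin n → ℝ) (σ ε γ : ℝ)
    (X : Finset (Fin n)) : ℝ :=
  (∏ i ∈ X, laplaceCDF ((p i - γ) * ε / σ)) *
    ∏ i ∈ Xᶜ, (1 - laplaceCDF ((p i - γ) * ε / σ))

lemma laplaceCDF_nonneg (x : ℝ) : 0 ≤ laplaceCDF x := by
  unfold laplaceCDF
  split_ifs with h
  · positivity
  · have : Real.exp (-x) ≤ 1 := Real.exp_le_one_iff.mpr (by linarith [not_lt.mp h])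
    linarith

lemma laplaceCDF_le_one (x : ℝ) : laplaceCDF x ≤ 1 := by
  unfold laplaceCDF
  split_ifs with h
  · have : Real.exp x ≤ 1 := Real.exp_le_one_iff.mpr h.le
    linarith
  · have := Real.exp_pos (-x)
    linarith

lemma laplaceCDF_neg (x : ℝ) : laplaceCDF (-x) = 1 - laplaceCDF x := by
  unfold laplaceCDF
  rcases lt_trichotomy x 0 with h | h | h
  · rw [if_neg (by linarith), if_pos h]
    ring_nf
  · subst h; norm_num
  · rw [if_pos (by linarith), if_neg (by linarith)]
    ring_nf

lemma laplaceCDF_mono : Monotone laplaceCDF := by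
  intro x y hxy
  unfold laplaceCDF
  split_ifs with hx hy hy
  · have := Real.exp_le_exp.mpr hxy; linarith
  · have h1 : Real.exp x ≤ 1 := Real.exp_le_one_iff.mpr hx.le
    have h2 : Real.exp (-y) ≤ 1 := Real.exp_le_one_iff.mpr (by linarith [not_lt.mp hy])
    linarith
  · linarith [not_lt.mp hx]
  · have := Real.exp_le_exp.mpr (neg_le_neg hxy); linarith

lemma laplaceCDF_core {x y : ℝ} (h : y ≤ x) :
    laplaceCDF x ≤ Real.exp (x - y) * laplaceCDF y := by
  unfold laplaceCDF
  split_ifs with hx hy hy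
  · have key : Real.exp (x - y) * Real.exp y = Real.exp x := by
      rw [← Real.exp_add]; ring_nf
    nlinarith [key]
  · linarith [not_lt.mp hy]
  · -- x ≥ 0, y < 0 : need 1 - e^{-x}/2 ≤ e^{x-y} * (e^y/2)
    have key : Real.exp (x - y) * Real.exp y = Real.exp x := by
      rw [← Real.exp_add]; ring_nf
    have h2 : Real.exp x * Real.exp (-x) = 1 := by
      rw [← Real.exp_add]; simp
    nlinarith [Real.exp_pos x, Real.exp_pos (-x), sq_nonneg (Real.exp x - 1)]
  · -- x ≥ 0, y ≥ 0
    set u := Real.exp (x - y) with hu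
    set a := Real.exp (-x) with ha
    set b := Real.exp (-y) with hb
    have hua : u * a = b := by rw [hu, ha, hb, ← Real.exp_add]; ring_nf
    have hu1 : 1 ≤ u := Real.one_le_exp (by linarith)
    have ha0 : 0 < a := Real.exp_pos _
    have hb1 : b ≤ 1 := Real.exp_le_one_iff.mpr (by linarith [not_lt.mp hy])
    have hab : a ≤ b := Real.exp_le_exp.mpr (by linarith)
    have key : 0 ≤ (b - a) * (2 - a - b) := by
      apply mul_nonneg <;> linarith
    -- goal: 1 - a/2 ≤ u * (1 - b/2); multiply by a: a - a²/2 ≤ b - b·a·u/2·... 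
    nlinarith [mul_pos ha0 (Real.exp_pos (-y)), sq_nonneg (a - b)]

lemma laplaceCDF_ratio (x y : ℝ) :
    laplaceCDF x ≤ Real.exp |x - y| * laplaceCDF y := by
  rcases le_total y x with h | h
  · rw [abs_of_nonneg (by linarith)]
    exact laplaceCDF_core h
  · calc laplaceCDF x ≤ laplaceCDF y := laplaceCDF_mono h
      _ = 1 * laplaceCDF y := (one_mul _).symm
      _ ≤ Real.exp |x - y| * laplaceCDF y :=
        mul_le_mul_of_nonneg_right (Real.one_le_exp (abs_nonneg _)) (laplaceCDF_nonneg y)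

lemma laplaceCDF_ratio' (x y : ℝ) :
    1 - laplaceCDF x ≤ Real.exp |x - y| * (1 - laplaceCDF y) := by
  rw [← laplaceCDF_neg, ← laplaceCDF_neg]
  have := laplaceCDF_ratio (-x) (-y)
  rwa [show |-x - -y| = |x - y| by rw [show -x - -y = -(x - y) by ring, abs_neg]] at this

theorem sparsification_is_DP {n : ℕ} (p p' : Fin n → ℝ) (σ ε γ : ℝ)
    (hσ : 0 < σ) (hε : 0 < ε) (hsens : (∑ i, |p i - p' i|) ≤ σ) :
    ∀ X : Finset (Fin n),
      sparsificationProb p σ ε γ X ≤ Real.exp ε * sparsificationProb p' σ ε γ X := by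
  intro X
  set a : Fin n → ℝ := fun i => (p i - γ) * ε / σ with ha
  set b : Fin n → ℝ := fun i => (p' i - γ) * ε / σ with hb
  set c : Fin n → ℝ := fun i => |a i - b i| with hc
  have hcval : ∀ i, c i = |p i - p' i| * (ε / σ) := by
    intro i
    have : a i - b i = (p i - p' i) * (ε / σ) := by
      simp only [ha, hb]; field_simp; ring
    rw [hc]
    simp only
    rw [this, abs_mul, abs_of_pos (div_pos hε hσ)]
  have hsum : ∑ i, c i ≤ ε := by
    simp only [hcval, ← Finset.sum_mul]
    calc (∑ i, |p i - p' i|) * (ε / σ) ≤ σ * (ε / σ) := by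
          apply mul_le_mul_of_nonneg_right hsens (le_of_lt (div_pos hε hσ))
      _ = ε := by field_simp
  have h1 : ∏ i ∈ X, laplaceCDF (a i) ≤
      ∏ i ∈ X, (Real.exp (c i) * laplaceCDF (b i)) := by
    apply Finset.prod_le_prod (fun i _ => laplaceCDF_nonneg _)
    intro i _
    exact laplaceCDF_ratio (a i) (b i)
  have h2 : ∏ i ∈ Xᶜ, (1 - laplaceCDF (a i)) ≤
      ∏ i ∈ Xᶜ, (Real.exp (c i) * (1 - laplaceCDF (b i))) := by
    apply Finset.prod_le_prod (fun i _ => by linarith [laplaceCDF_le_one (a i)])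
    intro i _
    exact laplaceCDF_ratio' (a i) (b i)
  have hnn1 : (0:ℝ) ≤ ∏ i ∈ X, laplaceCDF (a i) :=
    Finset.prod_nonneg fun i _ => laplaceCDF_nonneg _
  have hnn2 : (0:ℝ) ≤ ∏ i ∈ Xᶜ, (1 - laplaceCDF (a i)) :=
    Finset.prod_nonneg fun i _ => by linarith [laplaceCDF_le_one (a i)]
  have hnn1' : (0:ℝ) ≤ ∏ i ∈ X, (Real.exp (c i) * laplaceCDF (b i)) :=
    Finset.prod_nonneg fun i _ => mul_nonneg (Real.exp_pos _).le (laplaceCDF_nonneg _)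
  have step : sparsificationProb p σ ε γ X ≤
      (∏ i ∈ X, (Real.exp (c i) * laplaceCDF (b i))) *
      (∏ i ∈ Xᶜ, (Real.exp (c i) * (1 - laplaceCDF (b i)))) := by
    unfold sparsificationProb
    exact mul_le_mul h1 h2 hnn2 hnn1'
  have split : (∏ i ∈ X, (Real.exp (c i) * laplaceCDF (b i))) *
      (∏ i ∈ Xᶜ, (Real.exp (c i) * (1 - laplaceCDF (b i)))) =
      (∏ i, Real.exp (c i)) * sparsificationProb p' σ ε γ X := by
    rw [Finset.prod_mul_distrib, Finset.prod_mul_distrib]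
    unfold sparsificationProb
    rw [← Finset.prod_mul_prod_compl X fun i => Real.exp (c i)]
    ring
  have hexp : (∏ i, Real.exp (c i)) ≤ Real.exp ε := by
    rw [← Real.exp_sum]
    exact Real.exp_le_exp.mpr hsum
  have hprob' : 0 ≤ sparsificationProb p' σ ε γ X := by
    unfold sparsificationProb
    exact mul_nonneg (Finset.prod_nonneg fun i _ => laplaceCDF_nonneg _)
      (Finset.prod_nonneg fun i _ => by linarith [laplaceCDF_le_one ((p' i - γ) * ε / σ)])
  calc sparsificationProb p σ ε γ X
      ≤ (∏ i, Real.exp (c i)) * sparsificationProb p' σ ε γ X := by rw [← split]; exact step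
    _ ≤ Real.exp ε * sparsificationProb p' σ ε γ X :=
        mul_le_mul_of_nonneg_right hexp hprob'
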